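/- Let K ⊆ H be standard subspaces and T := S_K* S_H (with natural domain {v ∈ Dom S_H : S_H v ∈ Dom S_K*}). Then T extends Δ_H, and for any λ ∈ ℂ with |λ| = 1, the eigenspace ker(T − λ) equals ℂ[(λ^{-1/2}K)′ ∩ H]. In particular Fix(T) = ℂ[K′ ∩ H] and Fix(−T) = ℂ[K^{⊥_ℝ} ∩ H]. -/

import Mathlib

open Complex Submodule Filter Topology

variable {E : Type*} [NormedAddCommGroup E] [InnerProductSpace ℂ E]

/-- Multiplication by `i` as a real-linear map. -/
noncomputable def mulI (E : Type*) [NormedAddCommGroup E] [InnerProductSpace ℂ E] :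
    E →ₗ[ℝ] E where
  toFun x := (Complex.I : ℂ) • x
  map_add' := fun x y => smul_add Complex.I x y
  map_smul' := fun r x => smul_comm Complex.I r x

/-- `H + iH` as a real submodule. -/
noncomputable def cspan (H : Submodule ℝ E) : Submodule ℝ E := H ⊔ H.map (mulI E)

/-- The symplectic complement `K' = {v : Im ⟨v, k⟩ = 0 ∀ k ∈ K}`. -/
noncomputable def sympl (K : Submodule ℝ E) : Submodule ℝ E where
  carrier := {v : E | ∀ k ∈ K, (inner ℂ v k : ℂ).im = 0}
  add_mem' := by
    intro a b ha hb k hk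
    simp only [Set.mem_setOf_eq] at *
    rw [inner_add_left, Complex.add_im, ha k hk, hb k hk, add_zero]
  zero_mem' := by intro k hk; simp
  smul_mem' := by
    intro c v hv k hk
    simp only [Set.mem_setOf_eq] at *
    have h : (c • v : E) = ((c : ℂ)) • v := by
      simp [Complex.coe_smul]
    rw [h, inner_smul_left]
    simp [hv k hk]

/-- The real-orthogonal complement `{v : Re ⟨v, k⟩ = 0 ∀ k ∈ K}`. -/
noncomputable def realPerp (K : Submodule ℝ E) : Submodule ℝ E where
  carrier := {v : E | ∀ k ∈ K, (inner ℂ v k : ℂ).re = 0}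
  add_mem' := by
    intro a b ha hb k hk
    simp only [Set.mem_setOf_eq] at *
    rw [inner_add_left, Complex.add_re, ha k hk, hb k hk, add_zero]
  zero_mem' := by intro k hk; simp
  smul_mem' := by
    intro c v hv k hk
    simp only [Set.mem_setOf_eq] at *
    have h : (c • v : E) = ((c : ℂ)) • v := by
      simp [Complex.coe_smul]
    rw [h, inner_smul_left]
    simp [hv k hk]

/-- A standard subspace: closed, cyclic and separating real subspace. -/
structure IsStandardSubspace (H : Submodule ℝ E) : Prop where
  isClosed : IsClosed (H : Set E)
  cyclic : Dense ((cspan H : Submodule ℝ E) : Set E)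
  separating : H ⊓ H.map (mulI E) = ⊥

/-- Scalar multiplication by a complex number as a real-linear map. -/
noncomputable def smulC (E : Type*) [NormedAddCommGroup E] [InnerProductSpace ℂ E]
    (mu : ℂ) : E →ₗ[ℝ] E where
  toFun x := mu • x
  map_add' := fun x y => smul_add mu x y
  map_smul' := fun r x => smul_comm mu r x


lemma mem_sympl' {K : Submodule ℝ E} {v : E} :
    v ∈ sympl K ↔ ∀ k ∈ K, (inner ℂ v k : ℂ).im = 0 := Iff.rfl

lemma real_smul_eq (r : ℝ) (x : E) : r • x = ((r : ℂ)) • x := by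
  simp [Complex.coe_smul]

lemma mem_cspan' {W : Submodule ℝ E} {v : E} :
    v ∈ cspan W ↔ ∃ a ∈ W, ∃ b ∈ W, v = a + Complex.I • b := by
  constructor
  · intro h
    rcases Submodule.mem_sup.1 h with ⟨a, ha, z, hz, hv⟩
    rcases Submodule.mem_map.1 hz with ⟨b, hb, rfl⟩
    exact ⟨a, ha, b, hb, hv.symm⟩
  · rintro ⟨a, ha, b, hb, rfl⟩
    exact Submodule.add_mem _ (Submodule.mem_sup_left ha)
      (Submodule.mem_sup_right ⟨b, hb, rfl⟩)

lemma cspan_mono' {W W' : Submodule ℝ E} (h : W ≤ W') : cspan W ≤ cspan W' :=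
  sup_le_sup h (Submodule.map_mono h)

lemma sympl_anti {W W' : Submodule ℝ E} (h : W ≤ W') : sympl W' ≤ sympl W :=
  fun v hv k hk => hv k (h hk)

lemma mem_sympl_map {K : Submodule ℝ E} (mu : ℂ) {x : E} :
    x ∈ sympl (K.map (smulC E mu)) ↔ (starRingEnd ℂ mu) • x ∈ sympl K := by
  constructor
  · intro h k hk
    have := h (mu • k) ⟨k, hk, rfl⟩
    rw [inner_smul_right] at this
    rwa [inner_smul_left, Complex.conj_conj]
  · intro h k' hk'
    rcases hk' with ⟨k, hk, rfl⟩
    show (inner ℂ x (mu • k) : ℂ).im = 0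
    have := h k hk
    rw [inner_smul_left, Complex.conj_conj] at this
    rwa [inner_smul_right]

lemma smulC_map_one (K : Submodule ℝ E) : K.map (smulC E 1) = K := by
  ext x
  constructor
  · rintro ⟨y, hy, rfl⟩; simpa [smulC] using hy
  · intro hx; exact ⟨x, hx, one_smul ℂ x⟩

lemma sympl_map_I (K : Submodule ℝ E) :
    sympl (K.map (smulC E Complex.I)) = realPerp K := by
  ext v
  constructor
  · intro h k hk
    have := h (Complex.I • k) ⟨k, hk, rfl⟩
    rw [inner_smul_right, Complex.mul_im, Complex.I_re, Complex.I_im] at this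
    simpa using this
  · intro h k' hk'
    rcases hk' with ⟨k, hk, rfl⟩
    show (inner ℂ v ((Complex.I : ℂ) • k) : ℂ).im = 0
    rw [inner_smul_right, Complex.mul_im, Complex.I_re, Complex.I_im]
    simpa using h k hk

theorem key (K H : Submodule ℝ E) (S SK' : E → E)
    (hS : ∀ h₁ ∈ H, ∀ h₂ ∈ H, S (h₁ + Complex.I • h₂) = h₁ - Complex.I • h₂)
    (hSK' : ∀ k₁ ∈ sympl K, ∀ k₂ ∈ sympl K,
        SK' (k₁ + Complex.I • k₂) = k₁ - Complex.I • k₂)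
    (lam mu : ℂ) (hlam : ‖lam‖ = 1) (hmu : mu ^ 2 = lam⁻¹) :
    {v : E | (v ∈ cspan H ∧ S v ∈ cspan (sympl K)) ∧ SK' (S v) = lam • v}
      = ((cspan (sympl (K.map (smulC E mu)) ⊓ H) : Submodule ℝ E) : Set E) := by
  set s : ℝ := mu.re with hs
  set t : ℝ := mu.im with ht0
  have hmu_eq : mu = (s:ℂ) + (t:ℂ) * Complex.I := (Complex.re_add_im mu).symm
  have hconj : (starRingEnd ℂ) mu = (s:ℂ) - (t:ℂ) * Complex.I := by
    simp [Complex.ext_iff, hs, ht0]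
  have hn : ‖mu‖ ^ 2 = 1 := by rw [← norm_pow, hmu, norm_inv, hlam]; norm_num
  have hstR : s ^ 2 + t ^ 2 = 1 := by
    have h2 : ‖mu‖ ^ 2 = s ^ 2 + t ^ 2 := by
      rw [Complex.sq_norm, Complex.normSq_apply, hs, ht0]; ring
    rw [← h2, hn]
  have hst : (s:ℂ) ^ 2 + (t:ℂ) ^ 2 = 1 := by exact_mod_cast congrArg (fun x : ℝ => (x:ℂ)) hstR
  have hmu0 : mu * ((s:ℂ) - (t:ℂ) * Complex.I) = 1 := by
    rw [hmu_eq]; linear_combination hst - (t:ℂ)^2 * Complex.I_sq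
  have hlam_eq : lam = ((s:ℂ) - (t:ℂ) * Complex.I) ^ 2 := by
    calc lam = (lam⁻¹)⁻¹ := (inv_inv lam).symm
    _ = (mu ^ 2)⁻¹ := by rw [hmu]
    _ = (mu⁻¹) ^ 2 := by rw [inv_pow]
    _ = ((s:ℂ) - (t:ℂ) * Complex.I) ^ 2 := by rw [inv_eq_of_mul_eq_one_right hmu0]
  ext v
  simp only [Set.mem_setOf_eq, SetLike.mem_coe]
  constructor
  · rintro ⟨⟨hvH, hvS⟩, heig⟩
    obtain ⟨h₁, hh₁, h₂, hh₂, hveq⟩ := mem_cspan'.1 hvH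
    obtain ⟨k₁, hk₁, k₂, hk₂, hSveq⟩ := mem_cspan'.1 hvS
    have hSv : S v = h₁ - Complex.I • h₂ := by rw [hveq]; exact hS h₁ hh₁ h₂ hh₂
    have eq1 : k₁ + Complex.I • k₂ = h₁ - Complex.I • h₂ := hSveq.symm.trans hSv
    have hSKv : SK' (S v) = k₁ - Complex.I • k₂ := by rw [hSveq]; exact hSK' _ hk₁ _ hk₂
    have eq2 : k₁ - Complex.I • k₂ =
        (((s:ℂ) - (t:ℂ) * Complex.I) ^ 2) • h₁ +
        (((s:ℂ) - (t:ℂ) * Complex.I) ^ 2) • (Complex.I • h₂) := by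
      rw [← hSKv, heig, hveq, smul_add, hlam_eq]
    have hk1 : k₁ = ((1 + ((s:ℂ) - (t:ℂ) * Complex.I) ^ 2)/2) • h₁ +
        ((((s:ℂ) - (t:ℂ) * Complex.I) ^ 2 - 1)/2 * Complex.I) • h₂ := by
      linear_combination (norm := module) ((1:ℂ)/2) • eq1 + ((1:ℂ)/2) • eq2
    have hk2' : Complex.I • k₂ = ((1 - ((s:ℂ) - (t:ℂ) * Complex.I) ^ 2)/2) • h₁ +
        (-(1 + ((s:ℂ) - (t:ℂ) * Complex.I) ^ 2)/2 * Complex.I) • h₂ := by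
      linear_combination (norm := module) ((1:ℂ)/2) • eq1 - ((1:ℂ)/2) • eq2
    have htk : ((t:ℂ)) • k₂ = (-(t:ℂ) * Complex.I) • (Complex.I • k₂) := by
      rw [smul_smul]; congr 1; linear_combination (t:ℂ) * Complex.I_sq
    have hsk : ((s:ℂ)) • k₂ = (-(s:ℂ) * Complex.I) • (Complex.I • k₂) := by
      rw [smul_smul]; congr 1; linear_combination (s:ℂ) * Complex.I_sq
    have hA : (starRingEnd ℂ) mu • h₁ = (s:ℂ) • k₁ + (t:ℂ) • k₂ := by
      rw [hconj, htk, hk1, hk2']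
      match_scalars
      · linear_combination ((1/2:ℂ)*(t:ℂ)*Complex.I + (-1/2:ℂ)*(s:ℂ)) * hst +
          ((-1/2:ℂ)*(t:ℂ)*(t:ℂ)*(t:ℂ)*Complex.I + (1/2:ℂ)*(s:ℂ)*(t:ℂ)*(t:ℂ)) * Complex.I_sq
      · linear_combination ((-1/2:ℂ)*(t:ℂ) + (-1/2:ℂ)*(s:ℂ)*Complex.I) * hst +
          ((-1/2:ℂ)*(t:ℂ) + (1/2:ℂ)*(t:ℂ)*(t:ℂ)*(t:ℂ) +
            (-1/2:ℂ)*(t:ℂ)*(t:ℂ)*(t:ℂ)*Complex.I*Complex.I +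
            (1/2:ℂ)*(s:ℂ)*(t:ℂ)*(t:ℂ)*Complex.I + (1/2:ℂ)*(s:ℂ)*(s:ℂ)*(t:ℂ)) * Complex.I_sq
    have hB : (starRingEnd ℂ) mu • h₂ = (t:ℂ) • k₁ - (s:ℂ) • k₂ := by
      rw [hconj, hsk, hk1, hk2']
      match_scalars
      · linear_combination ((1/2:ℂ)*(t:ℂ) + (1/2:ℂ)*(s:ℂ)*Complex.I) * hst +
          ((-1/2:ℂ)*(t:ℂ)*(t:ℂ)*(t:ℂ) + (1/2:ℂ)*(s:ℂ)*(t:ℂ)*(t:ℂ)*Complex.I +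
            (-1:ℂ)*(s:ℂ)*(s:ℂ)*(t:ℂ)) * Complex.I_sq +
          ((-1/2:ℂ)*(t:ℂ) + (1/2:ℂ)*(t:ℂ)*Complex.I + (-1/2:ℂ)*(s:ℂ) + (-1/2:ℂ)*(s:ℂ)*Complex.I) * hst +
          ((1/2:ℂ)*(t:ℂ)*(t:ℂ)*(t:ℂ) + (-1/2:ℂ)*(t:ℂ)*(t:ℂ)*(t:ℂ)*Complex.I + (1/2:ℂ)*(s:ℂ) + (1/2:ℂ)*(s:ℂ)*(t:ℂ)*(t:ℂ) + (-1/2:ℂ)*(s:ℂ)*(t:ℂ)*(t:ℂ)*Complex.I + (1/2:ℂ)*(s:ℂ)*(t:ℂ)*(t:ℂ)*Complex.I*Complex.I + (s:ℂ)*(s:ℂ)*(t:ℂ) + (-1:ℂ)*(s:ℂ)*(s:ℂ)*(t:ℂ)*Complex.I + (1/2:ℂ)*(s:ℂ)*(s:ℂ)*(s:ℂ)) * Complex.I_sq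
      · linear_combination ((1/2:ℂ)*(t:ℂ)*Complex.I + (-1/2:ℂ)*(s:ℂ)) * hst +
          ((-1/2:ℂ)*(t:ℂ)*(t:ℂ)*(t:ℂ)*Complex.I + (1/2:ℂ)*(s:ℂ) + (1/2:ℂ)*(s:ℂ)*(t:ℂ)*(t:ℂ) +
            (1/2:ℂ)*(s:ℂ)*(t:ℂ)*(t:ℂ)*Complex.I*Complex.I +
            (-1:ℂ)*(s:ℂ)*(s:ℂ)*(t:ℂ)*Complex.I + (1/2:ℂ)*(s:ℂ)*(s:ℂ)*(s:ℂ)) * Complex.I_sq +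
          ((1/2:ℂ)*(t:ℂ) + (-1/2:ℂ)*(t:ℂ)*Complex.I + (1/2:ℂ)*(s:ℂ) + (1/2:ℂ)*(s:ℂ)*Complex.I) * hst +
          ((-1/2:ℂ)*(t:ℂ)*(t:ℂ)*(t:ℂ) + (1/2:ℂ)*(t:ℂ)*(t:ℂ)*(t:ℂ)*Complex.I + (-1/2:ℂ)*(s:ℂ) + (-1/2:ℂ)*(s:ℂ)*(t:ℂ)*(t:ℂ) + (1/2:ℂ)*(s:ℂ)*(t:ℂ)*(t:ℂ)*Complex.I + (-1/2:ℂ)*(s:ℂ)*(t:ℂ)*(t:ℂ)*Complex.I*Complex.I + (-1:ℂ)*(s:ℂ)*(s:ℂ)*(t:ℂ) + (s:ℂ)*(s:ℂ)*(t:ℂ)*Complex.I + (-1/2:ℂ)*(s:ℂ)*(s:ℂ)*(s:ℂ)) * Complex.I_sq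
    have hh1mem : h₁ ∈ sympl (K.map (smulC E mu)) := by
      rw [mem_sympl_map]
      have : (starRingEnd ℂ) mu • h₁ = s • k₁ + t • k₂ := by
        rw [hA, real_smul_eq, real_smul_eq]
      rw [this]
      exact Submodule.add_mem _ (Submodule.smul_mem _ s hk₁) (Submodule.smul_mem _ t hk₂)
    have hh2mem : h₂ ∈ sympl (K.map (smulC E mu)) := by
      rw [mem_sympl_map]
      have : (starRingEnd ℂ) mu • h₂ = t • k₁ - s • k₂ := by
        rw [hB, real_smul_eq, real_smul_eq]
      rw [this]
      exact Submodule.sub_mem _ (Submodule.smul_mem _ t hk₁) (Submodule.smul_mem _ s hk₂)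
    exact mem_cspan'.2 ⟨h₁, ⟨hh1mem, hh₁⟩, h₂, ⟨hh2mem, hh₂⟩, hveq⟩
  · intro hv
    obtain ⟨a, ha, b, hb, hveq⟩ := mem_cspan'.1 hv
    obtain ⟨haS, haH⟩ := ha
    obtain ⟨hbS, hbH⟩ := hb
    have hx : (starRingEnd ℂ) mu • a ∈ sympl K := (mem_sympl_map mu).1 haS
    have hy : (starRingEnd ℂ) mu • b ∈ sympl K := (mem_sympl_map mu).1 hbS
    set x : E := (starRingEnd ℂ) mu • a with hxdef
    set y : E := (starRingEnd ℂ) mu • b with hydef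
    have hk₁ : s • x + t • y ∈ sympl K :=
      Submodule.add_mem _ (Submodule.smul_mem _ s hx) (Submodule.smul_mem _ t hy)
    have hk₂ : t • x - s • y ∈ sympl K :=
      Submodule.sub_mem _ (Submodule.smul_mem _ t hx) (Submodule.smul_mem _ s hy)
    have hxa : x = ((s:ℂ) - (t:ℂ) * Complex.I) • a := by rw [hxdef, hconj]
    have hyb : y = ((s:ℂ) - (t:ℂ) * Complex.I) • b := by rw [hydef, hconj]
    have hI1 : a - Complex.I • b = (s • x + t • y) + Complex.I • (t • x - s • y) := by
      rw [real_smul_eq s x, real_smul_eq t y, real_smul_eq t x, real_smul_eq s y, hxa, hyb]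
      match_scalars
      · linear_combination ((-1:ℂ)) * hst + ((t:ℂ)*(t:ℂ)) * Complex.I_sq
      · linear_combination (Complex.I) * hst + ((-1:ℂ)*(s:ℂ)*(t:ℂ)) * Complex.I_sq
    have hSv : S v = a - Complex.I • b := by rw [hveq]; exact hS a haH b hbH
    have hSv' : S v = (s • x + t • y) + Complex.I • (t • x - s • y) := hSv.trans hI1
    have hSKv : SK' (S v) = (s • x + t • y) - Complex.I • (t • x - s • y) := by
      rw [hSv']; exact hSK' _ hk₁ _ hk₂
    refine ⟨⟨hveq ▸ mem_cspan'.2 ⟨a, haH, b, hbH, rfl⟩, ?_⟩, ?_⟩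
    · exact mem_cspan'.2 ⟨_, hk₁, _, hk₂, hSv'⟩
    · rw [hSKv, hveq, hlam_eq]
      rw [real_smul_eq s x, real_smul_eq t y, real_smul_eq t x, real_smul_eq s y, hxa, hyb]
      match_scalars
      · ring
      · linear_combination ((-1:ℂ)*(t:ℂ)*(t:ℂ)*Complex.I + (s:ℂ)*(t:ℂ)) * Complex.I_sq

/-- `T = S_K* S_H = S_{K'} ∘ S_H` extends `Δ_H = S_{H'} ∘ S_H`, and for `|λ| = 1`
(with `μ² = λ⁻¹`) the eigenspace `ker (T − λ)` equals `ℂ[(μK)' ∩ H]`. In particular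
`Fix T = ℂ[K' ∩ H]` and `Fix (−T) = ℂ[K^{⊥ᵣ} ∩ H]`. -/
theorem stmt14 {E : Type*} [NormedAddCommGroup E] [InnerProductSpace ℂ E] [CompleteSpace E]
    (H K : Submodule ℝ E) (hH : IsStandardSubspace H) (hK : IsStandardSubspace K)
    (hKH : K ≤ H)
    (S SK' SH' : E → E)
    (hS : ∀ h₁ ∈ H, ∀ h₂ ∈ H, S (h₁ + Complex.I • h₂) = h₁ - Complex.I • h₂)
    (hSK' : ∀ k₁ ∈ sympl K, ∀ k₂ ∈ sympl K,
        SK' (k₁ + Complex.I • k₂) = k₁ - Complex.I • k₂)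
    (hSH' : ∀ x₁ ∈ sympl H, ∀ x₂ ∈ sympl H,
        SH' (x₁ + Complex.I • x₂) = x₁ - Complex.I • x₂)
    (domT : Set E)
    (hdomT : domT = {v : E | v ∈ (cspan H : Submodule ℝ E) ∧
        S v ∈ (cspan (sympl K) : Submodule ℝ E)}) :
    (∀ v ∈ (cspan H : Submodule ℝ E), S v ∈ (cspan (sympl H) : Submodule ℝ E) →
        v ∈ domT ∧ SK' (S v) = SH' (S v)) ∧
    (∀ lam mu : ℂ, ‖lam‖ = 1 → mu ^ 2 = lam⁻¹ →
        {v : E | v ∈ domT ∧ SK' (S v) = lam • v}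
          = ((cspan (sympl (K.map (smulC E mu)) ⊓ H) : Submodule ℝ E) : Set E)) ∧
    ({v : E | v ∈ domT ∧ SK' (S v) = v}
        = ((cspan (sympl K ⊓ H) : Submodule ℝ E) : Set E)) ∧
    ({v : E | v ∈ domT ∧ SK' (S v) = -v}
        = ((cspan (realPerp K ⊓ H) : Submodule ℝ E) : Set E)) := by
  subst hdomT
  refine ⟨?_, ?_, ?_, ?_⟩
  · intro v hv hSv
    refine ⟨⟨hv, cspan_mono' (sympl_anti hKH) hSv⟩, ?_⟩
    obtain ⟨x₁, hx₁, x₂, hx₂, hEq⟩ := mem_cspan'.1 hSv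
    rw [hEq, hSK' _ (sympl_anti hKH hx₁) _ (sympl_anti hKH hx₂), hSH' _ hx₁ _ hx₂]
  · intro lam mu hlam hmu
    exact key K H S SK' hS hSK' lam mu hlam hmu
  · have h := key K H S SK' hS hSK' 1 1 (by norm_num) (by norm_num)
    rw [smulC_map_one] at h
    simp only [one_smul] at h
    exact h
  · have h := key K H S SK' hS hSK' (-1) Complex.I (by norm_num)
      (by rw [Complex.I_sq]; norm_num)
    rw [sympl_map_I] at h
    simp only [neg_smul, one_smul] at h
    exact h
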